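/- Let R be a Poisson ring over a commutative ℚ-algebra S, and let A, B, C ∈ R with ⁅A,B⁆ = C. Suppose that for scalars α_1,…,α_{L+1}, δ, ε, β, λ_1,…,λ_M, ζ ∈ S one has ⁅A,C⁆ = Σ_{i=1}^{L+1} α_i A^i + δ·B + ε·1 + 2β·AB and ⁅B,C⁆ = Σ_{i=1}^{M} λ_i A^i − β·B² − α_1·B − Σ_{i=1}^{L} (i+1)α_{i+1}·A^i B + ζ·1. Then the element K := C² − Σ_{i=1}^{L+1} 2α_i·A^i B − 2β·A B² + 2ζ·A + Σ_{i=1}^{M} (2/(i+1))·λ_i·A^{i+1} − 2ε·B − δ·B² satisfies ⁅K,A⁆ = 0 and ⁅K,B⁆ = 0. -/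

import Mathlib

/-- A Poisson ring over a commutative ring `S`: a commutative `S`-algebra `R` that is
simultaneously a Lie ring whose `S`-bilinear bracket satisfies the Leibniz rule. -/
structure PoissonBracket (S R : Type*) [CommRing S] [CommRing R] [Algebra S R] where
  br : R → R → R
  add_left : ∀ x y z : R, br (x + y) z = br x z + br y z
  add_right : ∀ x y z : R, br x (y + z) = br x y + br x z
  smul_left : ∀ (s : S) (x y : R), br (s • x) y = s • br x y
  smul_right : ∀ (s : S) (x y : R), br x (s • y) = s • br x y
  lie_self : ∀ x : R, br x x = 0
  jacobi : ∀ x y z : R, br x (br y z) + br y (br z x) + br z (br x y) = 0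
  leibniz : ∀ x y z : R, br x (y * z) = br x y * z + y * br x z

namespace PoissonBracket
variable {S R : Type*} [CommRing S] [CommRing R] [Algebra S R] (P : PoissonBracket S R)

lemma zero_right (x : R) : P.br x 0 = 0 := by
  have := P.smul_right (0 : S) x 0; simpa using this

lemma skew (x y : R) : P.br x y = - P.br y x := by
  have h := P.lie_self (x + y)
  rw [P.add_left, P.add_right, P.add_right, P.lie_self, P.lie_self] at h
  linear_combination h

lemma sub_right (x y z : R) : P.br x (y - z) = P.br x y - P.br x z := by
  have h := P.add_right x (y - z) z
  rw [sub_add_cancel] at h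
  linear_combination -h

lemma sum_right {ι : Type*} (x : R) (s : Finset ι) (f : ι → R) :
    P.br x (∑ i ∈ s, f i) = ∑ i ∈ s, P.br x (f i) := by
  classical
  induction s using Finset.induction with
  | empty => simpa using P.zero_right x
  | insert _ _ h ih => rw [Finset.sum_insert h, Finset.sum_insert h, P.add_right, ih]

lemma one_right (x : R) : P.br x 1 = 0 := by
  have h := P.leibniz x 1 1
  rw [mul_one, one_mul] at h
  linear_combination -h

lemma pow_right (x y : R) (n : ℕ) :
    P.br x (y ^ (n + 1)) = ((n : R) + 1) * y ^ n * P.br x y := by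
  induction n with
  | zero => simp
  | succ n ih =>
    rw [pow_succ, P.leibniz, ih]
    push_cast
    ring

lemma pow_self (x : R) (n : ℕ) : P.br x (x ^ n) = 0 := by
  cases n with
  | zero => simpa using P.one_right x
  | succ n => rw [P.pow_right, P.lie_self, mul_zero]

end PoissonBracket

open Finset in
/-- Proposition 2 of the paper: the Casimir element
`K = C² - Σ 2α_i A^i B - 2β A B² + 2ζ A + Σ (2/(i+1)) λ_i A^{i+1} - 2ε B - δ B²`
Poisson-commutes with `A` and `B`. -/
theorem stmt16 {S R : Type*} [CommRing S] [Algebra ℚ S] [CommRing R] [Algebra S R]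
    (P : PoissonBracket S R)
    (M : ℕ) (hM : 1 ≤ M) (L : ℕ) (hL : L = M / 2)
    (A B C : R) (hC : P.br A B = C)
    (α lam : ℕ → S) (δ ε β ζ : S)
    (hAC : P.br A C =
      ∑ i ∈ Finset.Icc 1 (L + 1), α i • A ^ i + δ • B + ε • (1 : R) + (2 * β) • (A * B))
    (hBC : P.br B C =
      ∑ i ∈ Finset.Icc 1 M, lam i • A ^ i - β • B ^ 2 - α 1 • B
        - ∑ i ∈ Finset.Icc 1 L, (((i : S) + 1) * α (i + 1)) • (A ^ i * B) + ζ • (1 : R))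
    (K : R)
    (hK : K = C ^ 2 - ∑ i ∈ Finset.Icc 1 (L + 1), (2 * α i) • (A ^ i * B)
      - (2 * β) • (A * B ^ 2) + (2 * ζ) • A
      + ∑ i ∈ Finset.Icc 1 M, ((2 / ((i : ℚ) + 1)) • lam i) • A ^ (i + 1)
      - (2 * ε) • B - δ • B ^ 2) :
    P.br K A = 0 ∧ P.br K B = 0 := by
  constructor
  · rw [P.skew, hK]
    simp only [pow_two, P.sub_right, P.add_right, P.sum_right, P.smul_right, P.leibniz,
      P.pow_self, P.lie_self, hC, hAC, zero_mul, mul_zero, zero_add, add_zero, smul_zero,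
      Finset.sum_const_zero]
    have h1 : (∑ i ∈ Icc 1 (L+1), α i • A ^ i) * C = ∑ i ∈ Icc 1 (L+1), α i • (A ^ i * C) := by
      rw [Finset.sum_mul]; exact Finset.sum_congr rfl fun i _ => smul_mul_assoc _ _ _
    have h2 : C * (∑ i ∈ Icc 1 (L+1), α i • A ^ i) = ∑ i ∈ Icc 1 (L+1), α i • (A ^ i * C) := by
      rw [Finset.mul_sum]
      exact Finset.sum_congr rfl fun i _ => by rw [mul_smul_comm, mul_comm C]
    have h3 : (∑ i ∈ Icc 1 (L+1), (2 * α i) • (A ^ i * C)) =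
        (∑ i ∈ Icc 1 (L+1), α i • (A ^ i * C)) + ∑ i ∈ Icc 1 (L+1), α i • (A ^ i * C) := by
      rw [← Finset.sum_add_distrib]
      exact Finset.sum_congr rfl fun i _ => by rw [two_mul, add_smul]
    simp only [add_mul, mul_add]
    rw [h1, h2, h3]
    generalize (∑ i ∈ Icc 1 (L+1), α i • (A ^ i * C)) = T
    simp only [Algebra.smul_def, map_mul, map_ofNat, mul_one]
    ring
  · rw [P.skew, hK]
    have hBA : P.br B A = -C := by rw [P.skew, hC]
    simp only [← Finset.Ico_add_one_right_eq_Icc, Finset.sum_Ico_eq_sum_range, Nat.succ_sub_one, Nat.add_sub_cancel] at hBC ⊢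
    simp only [Nat.add_comm 1] at hBC ⊢
    simp only [pow_two, P.sub_right, P.add_right, P.sum_right, P.smul_right, P.leibniz,
      P.pow_right, P.pow_self, P.lie_self, hBA, hBC, zero_mul, mul_zero, zero_add, add_zero,
      smul_zero, Finset.sum_const_zero, mul_neg, neg_mul, smul_neg, pow_zero, Nat.cast_zero,
      Nat.cast_add, Nat.cast_one, zero_add, one_mul, mul_one]
    have key : ∀ x : ℕ, ((x:S)+1+1) * ((2/((x:ℚ)+1+1)) • lam (x+1)) = lam (x+1) + lam (x+1) := by
      intro x
      have h0 : ((x:ℚ)+1+1) ≠ 0 := by positivity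
      have h2 : ((x:ℚ)+1+1) * (2/((x:ℚ)+1+1)) = 2 := by field_simp
      have hc : ((x:S)+1+1) = algebraMap ℚ S ((x:ℚ)+1+1) := by
        simp [map_add, map_natCast, map_one]
      rw [hc, Algebra.smul_def, ← mul_assoc, ← map_mul, h2]
      rw [show ((2:ℚ)) = ((2:ℕ):ℚ) by norm_num, map_natCast]
      push_cast
      ring
    have e1 : (∑ x ∈ Finset.range M, lam (x + 1) • A ^ (x + 1)) * C
        = ∑ x ∈ Finset.range M, lam (x + 1) • (A ^ (x + 1) * C) := by
      rw [Finset.sum_mul]; exact Finset.sum_congr rfl fun i _ => smul_mul_assoc _ _ _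
    have e1' : C * (∑ x ∈ Finset.range M, lam (x + 1) • A ^ (x + 1))
        = ∑ x ∈ Finset.range M, lam (x + 1) • (A ^ (x + 1) * C) := by
      rw [Finset.mul_sum]
      exact Finset.sum_congr rfl fun i _ => by rw [mul_smul_comm, mul_comm C]
    have e2 : (∑ x ∈ Finset.range L, (((x:S) + 1 + 1) * α (x + 1 + 1)) • (A ^ (x + 1) * B)) * C
        = ∑ x ∈ Finset.range L, (((x:S) + 1 + 1) * α (x + 1 + 1)) • (A ^ (x + 1) * B * C) := by
      rw [Finset.sum_mul]; exact Finset.sum_congr rfl fun i _ => smul_mul_assoc _ _ _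
    have e2' : C * (∑ x ∈ Finset.range L, (((x:S) + 1 + 1) * α (x + 1 + 1)) • (A ^ (x + 1) * B))
        = ∑ x ∈ Finset.range L, (((x:S) + 1 + 1) * α (x + 1 + 1)) • (A ^ (x + 1) * B * C) := by
      rw [Finset.mul_sum]
      exact Finset.sum_congr rfl fun i _ => by rw [mul_smul_comm, mul_comm C, mul_assoc]
    have e3 : (∑ x ∈ Finset.range (L + 1), -((2 * α (x + 1)) • (((x:R) + 1) * A ^ x * C * B)))
        = -(α 1 • (C * B) + α 1 • (C * B))
          - ((∑ x ∈ Finset.range L, (((x:S) + 1 + 1) * α (x + 1 + 1)) • (A ^ (x + 1) * B * C))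
            + ∑ x ∈ Finset.range L, (((x:S) + 1 + 1) * α (x + 1 + 1)) • (A ^ (x + 1) * B * C)) := by
      rw [Finset.sum_range_succ']
      have h5 : (∑ x ∈ Finset.range L,
            -((2 * α (x + 1 + 1)) • ((((x+1:ℕ):R) + 1) * A ^ (x+1) * C * B)))
          = ∑ x ∈ Finset.range L, -((((x:S)+1+1) * α (x+1+1)) • (A^(x+1) * B * C)
              + (((x:S)+1+1) * α (x+1+1)) • (A^(x+1) * B * C)) := by
        refine Finset.sum_congr rfl fun x _ => ?_
        simp only [Algebra.smul_def, map_mul, map_add, map_natCast, map_one, map_ofNat]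
        push_cast
        ring
      rw [h5, Finset.sum_neg_distrib, Finset.sum_add_distrib]
      have hf0 : -((2 * α (0 + 1)) • ((((0:ℕ):R) + 1) * A ^ 0 * C * B))
          = -(α 1 • (C * B) + α 1 • (C * B)) := by
        norm_num [two_mul, add_smul]
      rw [hf0]
      abel
    have e4 : (∑ x ∈ Finset.range M,
          -(((2 / ((x:ℚ) + 1 + 1)) • lam (x + 1)) • (((x:R) + 1 + 1) * A ^ (x + 1) * C)))
        = -((∑ x ∈ Finset.range M, lam (x + 1) • (A ^ (x + 1) * C))
            + ∑ x ∈ Finset.range M, lam (x + 1) • (A ^ (x + 1) * C)) := by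
      rw [← Finset.sum_add_distrib, ← Finset.sum_neg_distrib]
      refine Finset.sum_congr rfl fun x _ => ?_
      have key2 := congrArg (algebraMap S R) (key x)
      simp only [Algebra.smul_def, map_mul, map_add, map_natCast, map_one] at key2 ⊢
      linear_combination (-(A ^ (x + 1) * C)) * key2
    have f1 : (∑ x ∈ Finset.range M, lam (x + 1) • A ^ (x + 1) - β • (B * B) - α 1 • B
          - ∑ x ∈ Finset.range L, (((x:S) + 1 + 1) * α (x + 1 + 1)) • (A ^ (x + 1) * B)
          + ζ • (1:R)) * C
        = (∑ x ∈ Finset.range M, lam (x + 1) • (A ^ (x + 1) * C)) - β • (B * B) * C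
          - α 1 • B * C
          - (∑ x ∈ Finset.range L, (((x:S) + 1 + 1) * α (x + 1 + 1)) • (A ^ (x + 1) * B * C))
          + ζ • (1:R) * C := by
      rw [add_mul, sub_mul, sub_mul, sub_mul, e1, e2]
    have f2 : C * (∑ x ∈ Finset.range M, lam (x + 1) • A ^ (x + 1) - β • (B * B) - α 1 • B
          - ∑ x ∈ Finset.range L, (((x:S) + 1 + 1) * α (x + 1 + 1)) • (A ^ (x + 1) * B)
          + ζ • (1:R))
        = (∑ x ∈ Finset.range M, lam (x + 1) • (A ^ (x + 1) * C)) - C * (β • (B * B))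
          - C * (α 1 • B)
          - (∑ x ∈ Finset.range L, (((x:S) + 1 + 1) * α (x + 1 + 1)) • (A ^ (x + 1) * B * C))
          + C * (ζ • (1:R)) := by
      rw [mul_add, mul_sub, mul_sub, mul_sub, e1', e2']
    rw [f1, f2, e3, e4]
    simp only [Algebra.smul_def, map_mul, map_add, map_one, map_ofNat, mul_one]
    ring
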